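/- Lemma E.1 (bounded degree property after trimming): in the LSBM under (A1), in the regime p̄ = O(log n/n), n·p̄ → ∞, for any constant C > 0 there exists a constant c₁ > 0 such that, for all sufficiently large n, with probability at least 1 − exp(−C·n·p̄), every node v ∈ Γ satisfies e(v, I ∩ Γ) ≤ c₁·n·p̄. -/

import Mathlib

open Finset Filter Real Asymptotics

/-- Unordered pairs of distinct nodes, represented as ordered pairs `(v, w)` with `v < w`. -/
abbrev Pairs (n : ℕ) : Type := {q : Fin n × Fin n // q.1 < q.2}

/-- A configuration of the LSBM: the cluster assignment `σ` together with the label observed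
on each unordered pair of distinct nodes (labels in `{0, …, L}`). -/
abbrev Config (n K L : ℕ) : Type := (Fin n → Fin K) × (Pairs n → Fin (L + 1))

/-- The probability mass of a configuration: nodes get i.i.d. clusters with law `α`, and
conditionally on `σ` the pairs get independent labels with law `p (σ v) (σ w)`. -/
noncomputable def mass {n K L : ℕ} (α : Fin K → ℝ)
    (p : Fin K → Fin K → Fin (L + 1) → ℝ) (c : Config n K L) : ℝ :=
  (∏ v, α (c.1 v)) * ∏ q : Pairs n, p (c.1 q.1.1) (c.1 q.1.2) (c.2 q)

/-- Probability of a set of configurations under the LSBM law. -/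
noncomputable def Pr {n K L : ℕ} (α : Fin K → ℝ)
    (p : Fin K → Fin K → Fin (L + 1) → ℝ) (S : Set (Config n K L)) : ℝ :=
  ∑ c : Config n K L, Set.indicator S (mass α p) c

/-- Expectation of a function of the configuration under the LSBM law. -/
noncomputable def Ex {n K L : ℕ} (α : Fin K → ℝ)
    (p : Fin K → Fin K → Fin (L + 1) → ℝ) (f : Config n K L → ℝ) : ℝ :=
  ∑ c : Config n K L, mass α p c * f c

/-- `Aobs E ℓ v w = 1` iff the pair `{v, w}` (with `v ≠ w`) received the label `ℓ`. -/
def Aobs {n L : ℕ} (E : Pairs n → Fin (L + 1)) (ℓ : Fin (L + 1)) (v w : Fin n) : ℕ :=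
  if h : v < w then (if E ⟨(v, w), h⟩ = ℓ then 1 else 0)
  else if h' : w < v then (if E ⟨(w, v), h'⟩ = ℓ then 1 else 0) else 0

/-- `e(v, S, ℓ)`: the number of nodes `w ∈ S` such that the pair `{v, w}` has label `ℓ`. -/
def eCnt {n L : ℕ} (E : Pairs n → Fin (L + 1)) (v : Fin n) (S : Finset (Fin n))
    (ℓ : Fin (L + 1)) : ℕ :=
  ∑ w ∈ S, Aobs E ℓ v w

/-- `e(v, S) = Σ_{ℓ=1}^L e(v, S, ℓ)`. -/
def eTot {n L : ℕ} (E : Pairs n → Fin (L + 1)) (v : Fin n) (S : Finset (Fin n)) : ℕ :=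
  ∑ ℓ ∈ univ.filter (fun ℓ : Fin (L + 1) => ℓ ≠ 0), eCnt E v S ℓ

/-- The cluster `I_k = {v : σ(v) = k}`. -/
def clusterSet {n K : ℕ} (σ : Fin n → Fin K) (k : Fin K) : Finset (Fin n) :=
  univ.filter fun v => σ v = k

/-- The estimated label density `p̃ = (Σ_{ℓ=1}^L Σ_{v>w} A^ℓ_{vw})/(n(n−1))`. -/
noncomputable def ptilde {n L : ℕ} (E : Pairs n → Fin (L + 1)) : ℝ :=
  (∑ ℓ ∈ univ.filter (fun ℓ : Fin (L + 1) => ℓ ≠ 0),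
    ∑ q : Pairs n, (if E q = ℓ then (1 : ℝ) else 0)) / (n * (n - 1))

/-- The degree of a node: the number of observed labels `≠ 0` on pairs containing it. -/
def degree {n L : ℕ} (E : Pairs n → Fin (L + 1)) (v : Fin n) : ℕ := eTot E v univ

/-- `Γ` is a valid trimming if it is obtained from `I` by removing `⌊n·exp(−n·p̃)⌋` nodes of
largest degrees. -/
def IsTrimming {n L : ℕ} (E : Pairs n → Fin (L + 1)) (Γ : Finset (Fin n)) : Prop :=
  Γ.card = n - Nat.floor ((n : ℝ) * Real.exp (-(n : ℝ) * ptilde E)) ∧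
  ∀ v ∈ Γ, ∀ w, w ∉ Γ → degree E v ≤ degree E w

section Aux
variable {n K L : ℕ}

lemma card_filter_ne_zero : (univ.filter (fun ℓ : Fin (L+1) => ℓ ≠ 0)).card = L := by
  rw [Finset.filter_ne', Finset.card_erase_of_mem (mem_univ _), Finset.card_univ,
    Fintype.card_fin]
  simp

lemma mass_nonneg (α : Fin K → ℝ) (P : Fin K → Fin K → Fin (L+1) → ℝ)
    (hα : ∀ k, 0 ≤ α k) (hP : ∀ i j ℓ, 0 ≤ P i j ℓ) (c : Config n K L) :
    0 ≤ mass α P c := by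
  exact mul_nonneg (Finset.prod_nonneg fun _ _ => hα _)
    (Finset.prod_nonneg fun _ _ => hP _ _ _)

lemma sum_pi_prod {ι : Type*} [Fintype ι] [DecidableEq ι] {κ : Type*} [Fintype κ]
    (f : ι → κ → ℝ) :
    ∑ E : ι → κ, ∏ q, f q (E q) = ∏ q, ∑ ℓ, f q ℓ := by
  rw [Finset.prod_univ_sum, Fintype.piFinset_univ]

lemma Ex_prod (α : Fin K → ℝ) (P : Fin K → Fin K → Fin (L+1) → ℝ)
    (G : Pairs n → Fin (L+1) → ℝ) :
    Ex α P (fun c : Config n K L => ∏ q : Pairs n, G q (c.2 q))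
      = ∑ σ : Fin n → Fin K, (∏ v, α (σ v)) *
          ∏ q : Pairs n, (∑ ℓ, P (σ q.1.1) (σ q.1.2) ℓ * G q ℓ) := by
  unfold Ex mass
  rw [Fintype.sum_prod_type]
  refine Finset.sum_congr rfl fun σ _ => ?_
  rw [← sum_pi_prod (fun q ℓ => P (σ q.1.1) (σ q.1.2) ℓ * G q ℓ), Finset.mul_sum]
  refine Finset.sum_congr rfl fun E _ => ?_
  rw [mul_assoc, ← Finset.prod_mul_distrib]

lemma sum_mass (α : Fin K → ℝ) (P : Fin K → Fin K → Fin (L+1) → ℝ)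
    (hαsum : ∑ k, α k = 1) (hPsum : ∀ i j, ∑ ℓ, P i j ℓ = 1) :
    ∑ c : Config n K L, mass α P c = 1 := by
  have h := Ex_prod (n := n) α P (fun _ _ => 1)
  simp only [mul_one, Finset.prod_const_one] at h
  unfold Ex at h
  simp only [mul_one] at h
  rw [h]
  have : ∀ σ : Fin n → Fin K, ∏ q : Pairs n, ∑ ℓ, P (σ q.1.1) (σ q.1.2) ℓ = 1 := by
    intro σ; exact Finset.prod_eq_one fun q _ => hPsum _ _
  simp only [this, mul_one]
  rw [sum_pi_prod (fun (_ : Fin n) k => α k)]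
  simp [hαsum]

variable {n K L : ℕ} {α : Fin K → ℝ} {P : Fin K → Fin K → Fin (L+1) → ℝ}

lemma Pr_mono (hα : ∀ k, 0 ≤ α k) (hP : ∀ i j ℓ, 0 ≤ P i j ℓ)
    {S S' : Set (Config n K L)} (h : S ⊆ S') : Pr α P S ≤ Pr α P S' := by
  refine Finset.sum_le_sum fun c _ => ?_
  classical
  by_cases hc : c ∈ S
  · rw [Set.indicator_of_mem hc, Set.indicator_of_mem (h hc)]
  · rw [Set.indicator_of_notMem hc]
    exact Set.indicator_nonneg (fun x _ => mass_nonneg α P hα hP x) _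

lemma Pr_union_le (hα : ∀ k, 0 ≤ α k) (hP : ∀ i j ℓ, 0 ≤ P i j ℓ)
    (S S' : Set (Config n K L)) : Pr α P (S ∪ S') ≤ Pr α P S + Pr α P S' := by
  unfold Pr
  rw [← Finset.sum_add_distrib]
  refine Finset.sum_le_sum fun c _ => ?_
  classical
  have hm := mass_nonneg α P hα hP c
  by_cases hc : c ∈ S
  · rw [Set.indicator_of_mem (Set.mem_union_left _ hc), Set.indicator_of_mem hc]
    have := Set.indicator_nonneg (fun x (_ : x ∈ S') => mass_nonneg α P hα hP x) c
    linarith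
  · by_cases hc' : c ∈ S'
    · rw [Set.indicator_of_mem (Set.mem_union_right _ hc'), Set.indicator_of_mem hc',
        Set.indicator_of_notMem hc]
      linarith
    · rw [Set.indicator_of_notMem (fun hcc => hcc.elim hc hc'),
        Set.indicator_of_notMem hc, Set.indicator_of_notMem hc']
      linarith

lemma Pr_compl (hαsum : ∑ k, α k = 1) (hPsum : ∀ i j, ∑ ℓ, P i j ℓ = 1)
    (S : Set (Config n K L)) : Pr α P S = 1 - Pr α P Sᶜ := by
  have : Pr α P S + Pr α P Sᶜ = 1 := by
    unfold Pr
    rw [← Finset.sum_add_distrib, ← sum_mass α P hαsum hPsum]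
    refine Finset.sum_congr rfl fun c _ => ?_
    classical
    by_cases hc : c ∈ S
    · rw [Set.indicator_of_mem hc, Set.indicator_of_notMem (by simpa using hc)]; ring
    · rw [Set.indicator_of_notMem hc, Set.indicator_of_mem (by simpa using hc)]; ring
  linarith

lemma markov (hα : ∀ k, 0 ≤ α k) (hP : ∀ i j ℓ, 0 ≤ P i j ℓ)
    (f : Config n K L → ℝ) (hf : ∀ c, 0 ≤ f c) (a : ℝ) (ha : 0 < a) :
    Pr α P {c | a ≤ f c} ≤ Ex α P f / a := by
  rw [le_div_iff₀ ha]
  unfold Pr Ex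
  rw [Finset.sum_mul]
  refine Finset.sum_le_sum fun c _ => ?_
  classical
  have hm := mass_nonneg α P hα hP c
  by_cases hc : c ∈ {c : Config n K L | a ≤ f c}
  · rw [Set.indicator_of_mem hc]
    exact mul_le_mul_of_nonneg_left hc hm
  · rw [Set.indicator_of_notMem hc, zero_mul]
    exact mul_nonneg hm (hf c)

lemma Ex_ite_eq_Pr (Q : Config n K L → Prop) [DecidablePred Q] :
    Ex α P (fun c => if Q c then (1:ℝ) else 0) = Pr α P {c | Q c} := by
  unfold Ex Pr
  refine Finset.sum_congr rfl fun c _ => ?_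
  simp only []
  by_cases hc : Q c
  · rw [if_pos hc, Set.indicator_of_mem (show c ∈ {c | Q c} from hc), mul_one]
  · rw [if_neg hc, Set.indicator_of_notMem (show c ∉ {c | Q c} from hc), mul_zero]

lemma Ex_sum_ite {m : ℕ} (Q : Fin m → Config n K L → Prop) [∀ v, DecidablePred (Q v)] :
    Ex α P (fun c => ∑ v, if Q v c then (1:ℝ) else 0) = ∑ v, Pr α P {c | Q v c} := by
  unfold Ex
  simp only [Finset.mul_sum]
  rw [Finset.sum_comm]
  exact Finset.sum_congr rfl fun v _ => Ex_ite_eq_Pr (Q v)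

lemma Ex_congr {n K L : ℕ} {α : Fin K → ℝ} {P : Fin K → Fin K → Fin (L+1) → ℝ}
    {f g : Config n K L → ℝ} (h : ∀ c, f c = g c) : Ex α P f = Ex α P g := by
  unfold Ex; exact Finset.sum_congr rfl fun c _ => by rw [h c]

set_option maxHeartbeats 1000000 in
lemma mgf_le {n K L : ℕ} {α : Fin K → ℝ} {P : Fin K → Fin K → Fin (L+1) → ℝ}
    (hα : ∀ k, 0 ≤ α k) (hαsum : ∑ k, α k = 1)
    (hP : ∀ i j ℓ, 0 ≤ P i j ℓ) (hPsum : ∀ i j, ∑ ℓ, P i j ℓ = 1)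
    (pb : ℝ) (hpb0 : 0 ≤ pb) (hpb : ∀ i j ℓ, ℓ ≠ 0 → P i j ℓ ≤ pb)
    (Q : Finset (Pairs n)) :
    Ex α P (fun c : Config n K L =>
        Real.exp (∑ q ∈ Q, (if c.2 q ≠ 0 then (1:ℝ) else 0)))
      ≤ Real.exp ((Real.exp 1 - 1) * L * pb * Q.card) := by
  classical
  set B : ℝ := Real.exp ((Real.exp 1 - 1) * L * pb) with hB
  have hBnn : 0 ≤ (Real.exp 1 - 1) * L * pb := by
    have h1 : (1:ℝ) ≤ Real.exp 1 := by
      have := Real.add_one_le_exp (1:ℝ); linarith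
    exact mul_nonneg (mul_nonneg (by linarith) (Nat.cast_nonneg L)) hpb0
  have hexp : ∀ c : Config n K L,
      Real.exp (∑ q ∈ Q, (if c.2 q ≠ 0 then (1:ℝ) else 0))
        = ∏ q : Pairs n, (fun q ℓ => if q ∈ Q then (if ℓ ≠ 0 then Real.exp 1 else 1) else 1) q (c.2 q) := by
    intro c
    rw [show (∑ q ∈ Q, (if c.2 q ≠ 0 then (1:ℝ) else 0))
        = ∑ q : Pairs n, (if q ∈ Q then (if c.2 q ≠ 0 then (1:ℝ) else 0) else 0) by
      rw [Finset.sum_ite_mem, Finset.univ_inter]]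
    rw [Real.exp_sum]
    refine Finset.prod_congr rfl fun q _ => ?_
    by_cases hq : q ∈ Q
    · by_cases h0 : c.2 q ≠ 0
      · simp [hq, h0]
      · simp [hq, h0]
    · simp [hq]
  calc Ex α P (fun c : Config n K L =>
        Real.exp (∑ q ∈ Q, (if c.2 q ≠ 0 then (1:ℝ) else 0)))
      = ∑ σ : Fin n → Fin K, (∏ v, α (σ v)) *
          ∏ q : Pairs n, (∑ ℓ, P (σ q.1.1) (σ q.1.2) ℓ *
            (if q ∈ Q then (if ℓ ≠ 0 then Real.exp 1 else 1) else 1)) := by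
        exact (Ex_congr (fun c => hexp c)).trans (Ex_prod α P (fun q ℓ => if q ∈ Q then (if ℓ ≠ 0 then Real.exp 1 else 1) else 1))
    _ ≤ ∑ σ : Fin n → Fin K, (∏ v, α (σ v)) * B ^ Q.card := by
        refine Finset.sum_le_sum fun σ _ => ?_
        refine mul_le_mul_of_nonneg_left ?_ (Finset.prod_nonneg fun _ _ => hα _)
        have hfac : ∀ q : Pairs n,
            (∑ ℓ, P (σ q.1.1) (σ q.1.2) ℓ *
              (if q ∈ Q then (if ℓ ≠ 0 then Real.exp 1 else 1) else 1))
            ≤ (if q ∈ Q then B else 1) := by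
          intro q
          by_cases hq : q ∈ Q
          · simp only [hq, if_true]
            have heq : ∀ ℓ : Fin (L+1), P (σ q.1.1) (σ q.1.2) ℓ *
                (if ℓ ≠ 0 then Real.exp 1 else 1)
                = P (σ q.1.1) (σ q.1.2) ℓ
                  + (if ℓ ≠ 0 then (Real.exp 1 - 1) * P (σ q.1.1) (σ q.1.2) ℓ else 0) := by
              intro ℓ; by_cases h0 : ℓ ≠ 0 <;> simp [h0] <;> ring
            rw [Finset.sum_congr rfl fun ℓ _ => heq ℓ, Finset.sum_add_distrib,
              hPsum, ← Finset.sum_filter]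
            have hsum2 : ∑ ℓ ∈ univ.filter (fun ℓ : Fin (L+1) => ℓ ≠ 0),
                (Real.exp 1 - 1) * P (σ q.1.1) (σ q.1.2) ℓ ≤ (Real.exp 1 - 1) * L * pb := by
              calc ∑ ℓ ∈ univ.filter (fun ℓ : Fin (L+1) => ℓ ≠ 0),
                  (Real.exp 1 - 1) * P (σ q.1.1) (σ q.1.2) ℓ
                  ≤ ∑ ℓ ∈ univ.filter (fun ℓ : Fin (L+1) => ℓ ≠ 0), (Real.exp 1 - 1) * pb := by
                    refine Finset.sum_le_sum fun ℓ hℓ => ?_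
                    have hℓ0 : ℓ ≠ 0 := (Finset.mem_filter.1 hℓ).2
                    have h1 : (1:ℝ) ≤ Real.exp 1 := by
                      have := Real.add_one_le_exp (1:ℝ); linarith
                    exact mul_le_mul_of_nonneg_left (hpb _ _ _ hℓ0) (by linarith)
                _ = (Real.exp 1 - 1) * L * pb := by
                    rw [Finset.sum_const, card_filter_ne_zero]; ring
            calc (1:ℝ) + ∑ ℓ ∈ univ.filter (fun ℓ : Fin (L+1) => ℓ ≠ 0),
                  (Real.exp 1 - 1) * P (σ q.1.1) (σ q.1.2) ℓ
                ≤ 1 + (Real.exp 1 - 1) * L * pb := by linarith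
              _ ≤ B := by
                  have := Real.add_one_le_exp ((Real.exp 1 - 1) * L * pb)
                  rw [hB]; linarith
          · simp only [hq, if_false]
            simp only [mul_one, hPsum]
            exact le_rfl
        calc ∏ q : Pairs n, (∑ ℓ, P (σ q.1.1) (σ q.1.2) ℓ *
              (if q ∈ Q then (if ℓ ≠ 0 then Real.exp 1 else 1) else 1))
            ≤ ∏ q : Pairs n, (if q ∈ Q then B else 1) := by
              refine Finset.prod_le_prod (fun q _ => ?_) (fun q _ => hfac q)
              refine Finset.sum_nonneg fun ℓ _ => mul_nonneg (hP _ _ _) ?_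
              by_cases hq : q ∈ Q <;> by_cases h0 : ℓ ≠ 0 <;>
                simp [hq, h0, Real.exp_nonneg, le_of_lt (Real.exp_pos 1), zero_le_one]
          _ = B ^ Q.card := by
              rw [Finset.prod_ite_mem, Finset.univ_inter, Finset.prod_const]
    _ = B ^ Q.card := by
        rw [← Finset.sum_mul, show ∑ σ : Fin n → Fin K, ∏ v, α (σ v) = 1 by
          rw [sum_pi_prod (fun (_ : Fin n) k => α k)]; simp [hαsum], one_mul]
    _ = Real.exp ((Real.exp 1 - 1) * L * pb * Q.card) := by
        rw [hB, ← Real.exp_nat_mul]; ring_nf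

section Counting
variable {n L : ℕ}

/-- pairs touching `v` -/
def touch (v : Fin n) : Finset (Pairs n) :=
  univ.filter (fun q : Pairs n => q.1.1 = v ∨ q.1.2 = v)

lemma degree_eq_sum (E : Pairs n → Fin (L+1)) (v : Fin n) :
    degree E v = ∑ q ∈ touch v, (if E q ≠ 0 then 1 else 0) := by
  unfold degree eTot eCnt
  rw [Finset.sum_comm]
  have hw : ∀ w : Fin n, ∑ ℓ ∈ univ.filter (fun ℓ : Fin (L+1) => ℓ ≠ 0), Aobs E ℓ v w
      = if h : v < w then (if E ⟨(v,w),h⟩ ≠ 0 then 1 else 0)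
        else if h' : w < v then (if E ⟨(w,v),h'⟩ ≠ 0 then 1 else 0) else 0 := by
    intro w
    unfold Aobs
    by_cases h : v < w
    · simp only [dif_pos h]
      rw [Finset.sum_ite_eq]
      simp [Finset.mem_filter]
    · simp only [dif_neg h]
      by_cases h' : w < v
      · simp only [dif_pos h']
        rw [Finset.sum_ite_eq]
        simp [Finset.mem_filter]
      · simp [dif_neg h']
  simp only [hw]
  rw [show (univ : Finset (Fin n)) = insert v (univ.erase v) by
    rw [Finset.insert_erase (mem_univ v)]]
  rw [Finset.sum_insert (Finset.notMem_erase v univ)]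
  rw [dif_neg (lt_irrefl v), dif_neg (lt_irrefl v), zero_add]
  refine Finset.sum_bij' (fun w hw' => if h : v < w then (⟨(v,w),h⟩ : Pairs n)
      else ⟨(w,v), lt_of_le_of_ne (not_lt.mp h) (Finset.mem_erase.mp hw').1⟩)
    (fun q _ => if q.1.1 = v then q.1.2 else q.1.1) ?_ ?_ ?_ ?_ ?_
  · intro w hw'
    by_cases h : v < w
    · simp [touch, dif_pos h]
    · simp [touch, dif_neg h]
  · intro q hq
    obtain ⟨⟨a, b⟩, hab⟩ := q
    simp only [touch, Finset.mem_filter, mem_univ, true_and] at hq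
    rcases hq with h1 | h2
    · subst h1
      simp [Finset.mem_erase, hab.ne']
    · subst h2
      simp [Finset.mem_erase, hab.ne]
  · intro w hw'
    by_cases h : v < w
    · simp [dif_pos h]
    · have hwv : w ≠ v := (Finset.mem_erase.mp hw').1
      simp [dif_neg h, hwv]
  · intro q hq
    obtain ⟨⟨a, b⟩, hab⟩ := q
    simp only [touch, Finset.mem_filter, mem_univ, true_and] at hq
    rcases hq with h1 | h2
    · subst h1
      simp [hab]
    · subst h2
      have hne : a ≠ b := hab.ne
      simp only [if_neg hne, dif_neg (asymm hab)]
  · intro w hw'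
    by_cases h : v < w
    · simp [dif_pos h]
    · have h' : w < v := lt_of_le_of_ne (not_lt.mp h) (Finset.mem_erase.mp hw').1
      simp [dif_neg h, dif_pos h']

lemma touch_card_le (v : Fin n) : (touch v).card ≤ n := by
  have : (touch v).card ≤ (univ : Finset (Fin n)).card := by
    refine Finset.card_le_card_of_injOn (fun q => if q.1.1 = v then q.1.2 else q.1.1)
      (fun _ _ => mem_univ _) ?_
    rintro ⟨⟨a, b⟩, hab⟩ h1 ⟨⟨a', b'⟩, hab'⟩ h2 heq
    simp only [touch, Finset.coe_filter, Set.mem_setOf_eq, mem_univ, true_and] at h1 h2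
    simp only at h1 h2 heq hab hab'
    rcases h1 with h1 | h1 <;> rcases h2 with h2 | h2
    · rw [if_pos h1, if_pos h2] at heq
      have ha : a = a' := h1.trans h2.symm
      exact Subtype.ext (by simp [ha, heq])
    · have hne' : a' ≠ v := by rintro rfl; exact absurd (h2 ▸ hab') (lt_irrefl _)
      rw [if_pos h1, if_neg hne'] at heq
      have : a < a := by
        calc a < b := hab
        _ = a' := heq
        _ < b' := hab'
        _ = a := h2.trans h1.symm
      exact absurd this (lt_irrefl _)
    · have hne' : a ≠ v := by rintro rfl; exact absurd (h1 ▸ hab) (lt_irrefl _)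
      rw [if_neg hne', if_pos h2] at heq
      have : a' < a' := by
        calc a' < b' := hab'
        _ = a := heq.symm
        _ < b := hab
        _ = a' := h1.trans h2.symm
      exact absurd this (lt_irrefl _)
    · have hne1 : a ≠ v := by rintro rfl; exact absurd (h1 ▸ hab) (lt_irrefl _)
      have hne2 : a' ≠ v := by rintro rfl; exact absurd (h2 ▸ hab') (lt_irrefl _)
      rw [if_neg hne1, if_neg hne2] at heq
      have hb : b = b' := h1.trans h2.symm
      exact Subtype.ext (by simp [hb, heq])
  simpa using this

lemma sum_labels_eq (E : Pairs n → Fin (L+1)) :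
    ∑ ℓ ∈ univ.filter (fun ℓ : Fin (L+1) => ℓ ≠ 0), ∑ q : Pairs n,
        (if E q = ℓ then (1:ℝ) else 0)
      = ∑ q : Pairs n, (if E q ≠ 0 then (1:ℝ) else 0) := by
  rw [Finset.sum_comm]
  refine Finset.sum_congr rfl fun q _ => ?_
  rw [Finset.sum_ite_eq]
  simp [Finset.mem_filter]

lemma two_mul_card_pairs : 2 * Fintype.card (Pairs n) = n * n - n := by
  rw [Fintype.card_subtype]
  have hlt := (univ : Finset (Fin n × Fin n)).filter (fun q => q.1 < q.2)
  have hswap : ((univ : Finset (Fin n × Fin n)).filter (fun q => q.1 < q.2)).card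
      = ((univ : Finset (Fin n × Fin n)).filter (fun q => q.2 < q.1)).card := by
    refine Finset.card_nbij (fun q => (q.2, q.1)) ?_ ?_ ?_
    · intro q hq; simp only [Finset.mem_coe, Finset.mem_filter, mem_univ, true_and] at hq ⊢; exact hq
    · intro q hq q' hq' h
      exact Prod.ext (congrArg Prod.snd h) (congrArg Prod.fst h)
    · intro q hq
      simp only [Finset.mem_filter, mem_univ, true_and, Set.mem_image] at hq ⊢
      exact ⟨(q.2, q.1), by simpa using hq, rfl⟩
  have hunion : (univ : Finset (Fin n × Fin n)).filter (fun q => q.1 ≠ q.2)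
      = ((univ : Finset (Fin n × Fin n)).filter (fun q => q.1 < q.2))
        ∪ ((univ : Finset (Fin n × Fin n)).filter (fun q => q.2 < q.1)) := by
    rw [← Finset.filter_or]
    exact Finset.filter_congr fun q _ => by
      constructor
      · exact fun h => lt_or_gt_of_ne h
      · rintro (h | h); exacts [h.ne, h.ne']
  have hdisj : Disjoint ((univ : Finset (Fin n × Fin n)).filter (fun q => q.1 < q.2))
      ((univ : Finset (Fin n × Fin n)).filter (fun q => q.2 < q.1)) := by
    rw [Finset.disjoint_left]
    intro q hq1 hq2
    simp only [Finset.mem_filter, mem_univ, true_and] at hq1 hq2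
    exact absurd (hq1.trans hq2) (lt_irrefl _)
  have hne : ((univ : Finset (Fin n × Fin n)).filter (fun q => q.1 ≠ q.2)).card
      = n * n - n := by
    rw [Finset.filter_not, Finset.card_sdiff_of_subset (Finset.filter_subset _ _)]
    have hdiag : ((univ : Finset (Fin n × Fin n)).filter (fun q => q.1 = q.2)).card = n := by
      rw [show ((univ : Finset (Fin n × Fin n)).filter (fun q => q.1 = q.2))
          = Finset.image (fun a => (a, a)) univ by
        ext q; simp only [Finset.mem_filter, mem_univ, true_and, Finset.mem_image]
        constructor
        · intro h; exact ⟨q.1, by rw [Prod.ext_iff]; exact ⟨rfl, h⟩⟩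
        · rintro ⟨a, rfl⟩; rfl]
      rw [Finset.card_image_of_injective _ (fun a b h => (Prod.ext_iff.mp h).1)]
      simp
    rw [hdiag]
    simp [Finset.card_univ]
  rw [hunion, Finset.card_union_of_disjoint hdisj, ← hswap] at hne
  omega

end Counting

lemma eTot_le_degree {n L : ℕ} (E : Pairs n → Fin (L+1)) (v : Fin n) (S : Finset (Fin n)) :
    eTot E v S ≤ degree E v := by
  unfold degree eTot eCnt
  exact Finset.sum_le_sum fun ℓ _ =>
    Finset.sum_le_sum_of_subset (Finset.subset_univ S)

lemma degree_cast {n L : ℕ} (E : Pairs n → Fin (L+1)) (v : Fin n) :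
    ((degree E v : ℕ) : ℝ) = ∑ q ∈ touch v, (if E q ≠ 0 then (1:ℝ) else 0) := by
  rw [degree_eq_sum]
  push_cast
  exact Finset.sum_congr rfl fun q _ => by split_ifs <;> simp

lemma card_pairs_real {n : ℕ} (hn : 1 ≤ n) :
    2 * (Fintype.card (Pairs n) : ℝ) ≤ (n:ℝ) * ((n:ℝ) - 1) := by
  have h := two_mul_card_pairs (n := n)
  have hle : n ≤ n * n := Nat.le_mul_of_pos_left n (by omega)
  have : ((2 * Fintype.card (Pairs n) : ℕ) : ℝ) = ((n * n - n : ℕ) : ℝ) := by rw [h]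
  rw [Nat.cast_mul, Nat.cast_sub hle] at this
  push_cast at this
  rw [this]
  have h1 : (1:ℝ) ≤ (n:ℝ) := by exact_mod_cast hn
  nlinarith [h1]


end Aux

set_option maxHeartbeats 1000000 in
/-- **Lemma E.1 (bounded degree property after trimming).** Under (A1), `p̄ = O(log n/n)`,
`n·p̄ → ∞`, for any `C > 0` there is `c₁ > 0` such that for all large `n`, with probability at
least `1 − exp(−C·n·p̄)`, every node `v ∈ Γ` satisfies `e(v, I ∩ Γ) ≤ c₁·n·p̄`. -/
theorem statement15
    (K L : ℕ) (hK : 2 ≤ K) (hL : 1 ≤ L)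
    (α : Fin K → ℝ) (hαpos : ∀ k, 0 < α k) (hαsum : ∑ k, α k = 1)
    (p : ℕ → Fin K → Fin K → Fin (L + 1) → ℝ)
    (hp0 : ∀ n i j ℓ, 0 ≤ p n i j ℓ) (hp1 : ∀ n i j ℓ, p n i j ℓ ≤ 1)
    (hpsym : ∀ n i j ℓ, p n i j ℓ = p n j i ℓ)
    (hpsum : ∀ n i j, ∑ ℓ, p n i j ℓ = 1)
    (pbar : ℕ → ℝ)
    (hpbar : ∀ n, IsGreatest {x | ∃ i j, ∃ ℓ : Fin (L + 1), ℓ ≠ 0 ∧ x = p n i j ℓ} (pbar n))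
    (η : ℝ) (hη : 0 < η)
    (hA1 : ∀ n i j k ℓ, p n i j ℓ ≤ η * p n i k ℓ)
    (hO : (fun n => pbar n) =O[atTop] (fun n : ℕ => Real.log n / n))
    (hgrow : Tendsto (fun n : ℕ => (n : ℝ) * pbar n) atTop atTop)
    (Γsel : (n : ℕ) → (Pairs n → Fin (L + 1)) → Finset (Fin n))
    (hΓ : ∀ (n : ℕ) (E : Pairs n → Fin (L + 1)), IsTrimming E (Γsel n E))
    (C : ℝ) (hC : 0 < C) :
    ∃ c₁ : ℝ, 0 < c₁ ∧
      ∀ᶠ n : ℕ in atTop,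
        1 - Real.exp (-C * ((n : ℝ) * pbar n)) ≤
          Pr α (p n) {c : Config n K L |
            ∀ v ∈ Γsel n c.2, (eTot c.2 v (Γsel n c.2) : ℝ) ≤ c₁ * ((n : ℝ) * pbar n)} := by
  classical
  have hexp1 : (1:ℝ) ≤ Real.exp 1 := by
    have := Real.add_one_le_exp (1:ℝ); linarith
  have hexp3 : Real.exp 1 < 3 := by
    have := Real.exp_one_lt_d9; linarith
  set c₁ : ℝ := 3 * L + C + 1 with hc₁
  have hLpos : (0:ℝ) < L := by exact_mod_cast hL
  have hc₁pos : 0 < c₁ := by rw [hc₁]; positivity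
  refine ⟨c₁, hc₁pos, ?_⟩
  have hδ : 0 < (3 - Real.exp 1) / 2 * L := by
    have : 0 < 3 - Real.exp 1 := by linarith
    positivity
  have hE3 : ∀ᶠ n : ℕ in atTop, C + 1 ≤ (3 - Real.exp 1) / 2 * L * ((n:ℝ) - 1) := by
    have ht : Tendsto (fun n : ℕ => (3 - Real.exp 1) / 2 * L * ((n:ℝ) - 1)) atTop atTop := by
      refine Tendsto.const_mul_atTop hδ ?_
      exact tendsto_atTop_add_const_right _ _ tendsto_natCast_atTop_atTop
    exact ht.eventually_ge_atTop (C + 1)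
  filter_upwards [hgrow.eventually_ge_atTop (max (Real.log 2) 1),
    Filter.eventually_ge_atTop 2, hE3] with n hn1 hn2 hn3
  -- notation
  set pb : ℝ := pbar n with hpbdef
  set P : Fin K → Fin K → Fin (L+1) → ℝ := p n with hPdef
  have hα0 : ∀ k, 0 ≤ α k := fun k => (hαpos k).le
  have hP0 : ∀ i j ℓ, 0 ≤ P i j ℓ := fun i j ℓ => hp0 n i j ℓ
  have hPsum : ∀ i j, ∑ ℓ, P i j ℓ = 1 := fun i j => hpsum n i j
  obtain ⟨⟨i0, j0, ℓ0, hℓ0, hpbeq⟩, hub⟩ := hpbar n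
  have hpb0 : 0 ≤ pb := by rw [hpbdef, hpbeq]; exact hp0 n i0 j0 ℓ0
  have hpble : ∀ i j ℓ, ℓ ≠ 0 → P i j ℓ ≤ pb := fun i j ℓ h => hub ⟨i, j, ℓ, h, rfl⟩
  have hnpb1 : 1 ≤ (n:ℝ) * pb := le_trans (le_max_right _ _) hn1
  have hnpblog : Real.log 2 ≤ (n:ℝ) * pb := le_trans (le_max_left _ _) hn1
  have hnpb0 : 0 ≤ (n:ℝ) * pb := by linarith
  have hn2' : (2:ℝ) ≤ (n:ℝ) := by exact_mod_cast hn2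
  have hnpos : (0:ℝ) < n := by linarith
  have hD : (0:ℝ) < (n:ℝ) * ((n:ℝ) - 1) := by nlinarith
  -- the events
  set Good : Set (Config n K L) := {c : Config n K L |
    ∀ v ∈ Γsel n c.2, (eTot c.2 v (Γsel n c.2) : ℝ) ≤ c₁ * ((n : ℝ) * pb)} with hGood
  set fT : Config n K L → ℝ := fun c =>
    Real.exp (∑ q : Pairs n, (if c.2 q ≠ 0 then (1:ℝ) else 0)) with hfT
  set aT : ℝ := Real.exp ((L:ℝ) * pb * ((n:ℝ) * ((n:ℝ) - 1))) with haT
  set A : Set (Config n K L) := {c : Config n K L | aT ≤ fT c} with hA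
  set Zf : Config n K L → ℝ := fun c =>
    ∑ v : Fin n, (if c₁ * ((n:ℝ) * pb) < ((degree c.2 v : ℕ) : ℝ) then (1:ℝ) else 0) with hZf
  set aB : ℝ := (n:ℝ) * Real.exp (-((L:ℝ) * ((n:ℝ) * pb))) with haB
  set B : Set (Config n K L) := {c : Config n K L | aB ≤ Zf c} with hB
  -- bound on Pr A
  have hPrA : Pr α P A ≤ Real.exp (-(C+1) * ((n:ℝ) * pb)) := by
    have hmark := markov hα0 hP0 fT (fun c => (Real.exp_pos _).le) aT (Real.exp_pos _)
    have hEx : Ex α P fT ≤ Real.exp ((Real.exp 1 - 1) * L * pb * (Fintype.card (Pairs n))) := by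
      have h := mgf_le hα0 hαsum hP0 hPsum pb hpb0 hpble (univ : Finset (Pairs n))
      rw [Finset.card_univ] at h
      exact h
    have haTpos : 0 < aT := by rw [haT]; positivity
    calc Pr α P A ≤ Ex α P fT / aT := hmark
    _ ≤ Real.exp ((Real.exp 1 - 1) * L * pb * (Fintype.card (Pairs n))) / aT := by
        exact (div_le_div_iff_of_pos_right haTpos).mpr hEx
    _ = Real.exp ((Real.exp 1 - 1) * L * pb * (Fintype.card (Pairs n))
          - (L:ℝ) * pb * ((n:ℝ) * ((n:ℝ) - 1))) := by rw [haT, ← Real.exp_sub]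
    _ ≤ Real.exp (-(C+1) * ((n:ℝ) * pb)) := by
        apply Real.exp_le_exp.mpr
        have hN := card_pairs_real (n := n) (by omega)
        have hf1 : (Real.exp 1 - 1) * L * pb * (Fintype.card (Pairs n))
            ≤ (Real.exp 1 - 1) / 2 * L * pb * ((n:ℝ) * ((n:ℝ) - 1)) := by
          nlinarith [mul_le_mul_of_nonneg_left hN
            (mul_nonneg (mul_nonneg (by linarith : (0:ℝ) ≤ (Real.exp 1 - 1) / 2) hLpos.le) hpb0)]
        have hf2 : (C + 1) * ((n:ℝ) * pb) ≤ (3 - Real.exp 1) / 2 * L * ((n:ℝ) - 1) * ((n:ℝ) * pb) :=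
          mul_le_mul_of_nonneg_right hn3 hnpb0
        nlinarith [hf1, hf2]
  -- bound on Pr B
  have hPrB : Pr α P B ≤ Real.exp (-(C+1) * ((n:ℝ) * pb)) := by
    have haBpos : 0 < aB := by rw [haB]; positivity
    have hZnn : ∀ c, 0 ≤ Zf c := by
      intro c; rw [hZf]
      exact Finset.sum_nonneg fun v _ => by split_ifs <;> norm_num
    have hmark := markov hα0 hP0 Zf hZnn aB haBpos
    have hExZ : Ex α P Zf
        = ∑ v : Fin n, Pr α P {c : Config n K L | c₁ * ((n:ℝ) * pb) < ((degree c.2 v : ℕ) : ℝ)} :=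
      Ex_sum_ite _
    have hv : ∀ v : Fin n, Pr α P {c : Config n K L | c₁ * ((n:ℝ) * pb) < ((degree c.2 v : ℕ) : ℝ)}
        ≤ Real.exp (-((L:ℝ)+C+1) * ((n:ℝ) * pb)) := by
      intro v
      have hsub : {c : Config n K L | c₁ * ((n:ℝ) * pb) < ((degree c.2 v : ℕ) : ℝ)}
          ⊆ {c : Config n K L | Real.exp (c₁ * ((n:ℝ) * pb))
              ≤ Real.exp (∑ q ∈ touch v, (if c.2 q ≠ 0 then (1:ℝ) else 0))} := by
        intro c hc
        simp only [Set.mem_setOf_eq] at hc ⊢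
        rw [← degree_cast]
        exact Real.exp_le_exp.mpr hc.le
      have hmark2 := markov hα0 hP0
        (fun c : Config n K L => Real.exp (∑ q ∈ touch v, (if c.2 q ≠ 0 then (1:ℝ) else 0)))
        (fun c => (Real.exp_pos _).le) (Real.exp (c₁ * ((n:ℝ) * pb))) (Real.exp_pos _)
      have hmgf := mgf_le hα0 hαsum hP0 hPsum pb hpb0 hpble (touch v)
      calc Pr α P {c : Config n K L | c₁ * ((n:ℝ) * pb) < ((degree c.2 v : ℕ) : ℝ)}
          ≤ Pr α P {c : Config n K L | Real.exp (c₁ * ((n:ℝ) * pb))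
              ≤ Real.exp (∑ q ∈ touch v, (if c.2 q ≠ 0 then (1:ℝ) else 0))} :=
            Pr_mono hα0 hP0 hsub
        _ ≤ Ex α P (fun c : Config n K L =>
              Real.exp (∑ q ∈ touch v, (if c.2 q ≠ 0 then (1:ℝ) else 0)))
              / Real.exp (c₁ * ((n:ℝ) * pb)) := hmark2
        _ ≤ Real.exp ((Real.exp 1 - 1) * L * pb * ((touch v).card))
              / Real.exp (c₁ * ((n:ℝ) * pb)) := by
            exact (div_le_div_iff_of_pos_right (Real.exp_pos _)).mpr hmgf
        _ = Real.exp ((Real.exp 1 - 1) * L * pb * ((touch v).card) - c₁ * ((n:ℝ) * pb)) := by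
            rw [← Real.exp_sub]
        _ ≤ Real.exp (-((L:ℝ)+C+1) * ((n:ℝ) * pb)) := by
            apply Real.exp_le_exp.mpr
            have hcard : ((touch v).card : ℝ) ≤ (n:ℝ) := by
              exact_mod_cast touch_card_le v
            have hf1 : (Real.exp 1 - 1) * L * pb * ((touch v).card)
                ≤ (Real.exp 1 - 1) * L * ((n:ℝ) * pb) := by
              nlinarith [mul_le_mul_of_nonneg_left hcard
                (mul_nonneg (mul_nonneg (by linarith : (0:ℝ) ≤ Real.exp 1 - 1) hLpos.le) hpb0)]
            have hf2 : (Real.exp 1 - 1) * L * ((n:ℝ) * pb) ≤ 2 * L * ((n:ℝ) * pb) := by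
              apply mul_le_mul_of_nonneg_right _ hnpb0
              nlinarith
            rw [hc₁]
            nlinarith [hf1, hf2]
    have hExZle : Ex α P Zf ≤ (n:ℝ) * Real.exp (-((L:ℝ)+C+1) * ((n:ℝ) * pb)) := by
      rw [hExZ]
      calc ∑ v : Fin n, Pr α P {c : Config n K L | c₁ * ((n:ℝ) * pb) < ((degree c.2 v : ℕ) : ℝ)}
          ≤ ∑ _v : Fin n, Real.exp (-((L:ℝ)+C+1) * ((n:ℝ) * pb)) :=
            Finset.sum_le_sum fun v _ => hv v
        _ = (n:ℝ) * Real.exp (-((L:ℝ)+C+1) * ((n:ℝ) * pb)) := by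
            rw [Finset.sum_const, card_univ, Fintype.card_fin, nsmul_eq_mul]
    calc Pr α P B ≤ Ex α P Zf / aB := hmark
      _ ≤ ((n:ℝ) * Real.exp (-((L:ℝ)+C+1) * ((n:ℝ) * pb))) / aB := by
          exact (div_le_div_iff_of_pos_right haBpos).mpr hExZle
      _ = Real.exp (-((L:ℝ)+C+1) * ((n:ℝ) * pb)) / Real.exp (-((L:ℝ) * ((n:ℝ) * pb))) := by
          rw [haB, mul_div_mul_left _ _ (ne_of_gt hnpos)]
      _ = Real.exp (-((L:ℝ)+C+1) * ((n:ℝ) * pb) - (-((L:ℝ) * ((n:ℝ) * pb)))) := by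
          rw [← Real.exp_sub]
      _ ≤ Real.exp (-(C+1) * ((n:ℝ) * pb)) := by
          apply Real.exp_le_exp.mpr; ring_nf; exact le_rfl
  -- inclusion
  have hincl : Goodᶜ ⊆ A ∪ B := by
    intro c hc
    simp only [Set.mem_compl_iff, hGood, Set.mem_setOf_eq] at hc
    push_neg at hc
    obtain ⟨v, hvΓ, hvbad⟩ := hc
    by_cases hpt : ptilde c.2 ≤ (L:ℝ) * pb
    · right
      show aB ≤ Zf c
      have htrim := hΓ n c.2
      set Γ : Finset (Fin n) := Γsel n c.2 with hΓdef
      set m : ℕ := Nat.floor ((n:ℝ) * Real.exp (-(n:ℝ) * ptilde c.2)) with hmdef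
      have hpt0 : 0 ≤ ptilde c.2 := by
        unfold ptilde
        apply div_nonneg
        · apply Finset.sum_nonneg; intro ℓ _
          apply Finset.sum_nonneg; intro q _; positivity
        · nlinarith
      have hmn : m ≤ n := by
        rw [hmdef]
        have hstep : (n:ℝ) * Real.exp (-(n:ℝ) * ptilde c.2) ≤ (n:ℝ) := by
          have hone : Real.exp (-(n:ℝ) * ptilde c.2) ≤ 1 := by
            rw [Real.exp_le_one_iff]
            nlinarith
          nlinarith
        calc Nat.floor ((n:ℝ) * Real.exp (-(n:ℝ) * ptilde c.2))
            ≤ Nat.floor ((n:ℝ)) := Nat.floor_mono hstep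
          _ = n := Nat.floor_natCast n
      have hcardΓ : Γ.card = n - m := htrim.1
      have hcardc : (univ \ Γ).card = m := by
        rw [Finset.card_sdiff_of_subset (Finset.subset_univ _), card_univ, Fintype.card_fin, hcardΓ]
        omega
      have hvin : v ∉ univ \ Γ := fun h => (Finset.mem_sdiff.mp h).2 hvΓ
      have hSins : (insert v (univ \ Γ)).card = m + 1 := by
        rw [Finset.card_insert_of_notMem hvin, hcardc]
      have hdegv : c₁ * ((n:ℝ) * pb) < ((degree c.2 v : ℕ) : ℝ) :=
        lt_of_lt_of_le hvbad (by exact_mod_cast eTot_le_degree c.2 v Γ)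
      have hZlow : ((m:ℝ) + 1) ≤ Zf c := by
        rw [hZf]
        have hone : ∀ w ∈ insert v (univ \ Γ),
            (if c₁ * ((n:ℝ) * pb) < ((degree c.2 w : ℕ) : ℝ) then (1:ℝ) else 0) = 1 := by
          intro w hw
          rcases Finset.mem_insert.mp hw with rfl | hw'
          · rw [if_pos hdegv]
          · have hle : degree c.2 v ≤ degree c.2 w :=
              htrim.2 v hvΓ w (Finset.mem_sdiff.mp hw').2
            have : c₁ * ((n:ℝ) * pb) < ((degree c.2 w : ℕ) : ℝ) :=
              lt_of_lt_of_le hdegv (by exact_mod_cast hle)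
            rw [if_pos this]
        have hstep1 : ((m:ℝ) + 1) = ∑ w ∈ insert v (univ \ Γ),
            (if c₁ * ((n:ℝ) * pb) < ((degree c.2 w : ℕ) : ℝ) then (1:ℝ) else 0) := by
          rw [Finset.sum_congr rfl hone, Finset.sum_const, hSins]
          push_cast; ring
        have hstep2 : ∑ w ∈ insert v (univ \ Γ),
            (if c₁ * ((n:ℝ) * pb) < ((degree c.2 w : ℕ) : ℝ) then (1:ℝ) else 0)
            ≤ ∑ w : Fin n,
            (if c₁ * ((n:ℝ) * pb) < ((degree c.2 w : ℕ) : ℝ) then (1:ℝ) else 0) := by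
          apply Finset.sum_le_sum_of_subset_of_nonneg (Finset.subset_univ _)
          intro w _ _; split_ifs <;> norm_num
        rw [hstep1]
        exact hstep2
      have hx : (n:ℝ) * Real.exp (-(n:ℝ) * ptilde c.2) < (m:ℝ) + 1 := by
        have h := Nat.lt_floor_add_one ((n:ℝ) * Real.exp (-(n:ℝ) * ptilde c.2))
        rw [hmdef]; push_cast; exact_mod_cast h
      have haB_le : aB ≤ (n:ℝ) * Real.exp (-(n:ℝ) * ptilde c.2) := by
        rw [haB]
        apply mul_le_mul_of_nonneg_left _ hnpos.le
        apply Real.exp_le_exp.mpr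
        nlinarith
      linarith
    · left
      show aT ≤ fT c
      push_neg at hpt
      have hnum : ptilde c.2 * ((n:ℝ) * ((n:ℝ) - 1))
          = ∑ q : Pairs n, (if c.2 q ≠ 0 then (1:ℝ) else 0) := by
        unfold ptilde
        rw [div_mul_cancel₀]
        · exact sum_labels_eq c.2
        · nlinarith
      rw [haT, hfT]
      apply Real.exp_le_exp.mpr
      rw [← hnum]
      exact mul_le_mul_of_nonneg_right hpt.le hD.le
  -- conclusion
  have h1 : Pr α P Good = 1 - Pr α P Goodᶜ := Pr_compl hαsum hPsum Good
  have h2 : Pr α P Goodᶜ ≤ Pr α P (A ∪ B) := Pr_mono hα0 hP0 hincl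
  have h3 : Pr α P (A ∪ B) ≤ Pr α P A + Pr α P B := Pr_union_le hα0 hP0 A B
  have h4 : 2 * Real.exp (-(C+1) * ((n:ℝ) * pb)) ≤ Real.exp (-C * ((n:ℝ) * pb)) := by
    have h2le : (2:ℝ) ≤ Real.exp ((n:ℝ) * pb) := by
      calc (2:ℝ) = Real.exp (Real.log 2) := (Real.exp_log (by norm_num)).symm
      _ ≤ Real.exp ((n:ℝ) * pb) := Real.exp_le_exp.mpr hnpblog
    have : Real.exp (-(C+1) * ((n:ℝ) * pb)) * Real.exp ((n:ℝ) * pb)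
        = Real.exp (-C * ((n:ℝ) * pb)) := by
      rw [← Real.exp_add]; ring_nf
    nlinarith [Real.exp_pos (-(C+1) * ((n:ℝ) * pb))]
  rw [hGood] at h1 ⊢
  rw [h1]
  have := hPrA.trans_eq rfl
  linarith
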